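/- If X̄_n is normal with mean 0 and variance σ²/n, then for λ_n = a√((log n)/n) with a, σ > 0, the probability P(|X̄_n| > λ_n) equals 2(1 - Φ((a/σ)√(log n))), and hence P(|X̄_n| > λ_n) · n^{a²/(2σ²)} · √(log n) converges to √2 σ/(a√π) as n → ∞. -/

import Mathlib

open Filter MeasureTheory ProbabilityTheory

noncomputable def stdNormalCDF (z : ℝ) : ℝ :=
  ∫ x in Set.Iic z, Real.exp (-x ^ 2 / 2) / Real.sqrt (2 * Real.pi)

open Real Set

noncomputable def gTail (t : ℝ) : ℝ := ∫ x in Set.Ioi t, Real.exp (-x ^ 2 / 2)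

lemma gauss_fun_eq : (fun x : ℝ => Real.exp (-x ^ 2 / 2))
    = fun x : ℝ => Real.exp (-(2⁻¹ : ℝ) * x ^ 2) := by
  funext x; congr 1; ring

lemma integrable_gauss : Integrable (fun x : ℝ => Real.exp (-x ^ 2 / 2)) := by
  rw [gauss_fun_eq]; exact integrable_exp_neg_mul_sq (by norm_num)

lemma integral_gauss_total : ∫ x : ℝ, Real.exp (-x ^ 2 / 2) = Real.sqrt (2 * Real.pi) := by
  rw [gauss_fun_eq, integral_gaussian]
  congr 1; field_simp

lemma one_sub_cdf (z : ℝ) :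
    1 - (∫ x in Set.Iic z, Real.exp (-x ^ 2 / 2) / Real.sqrt (2 * Real.pi))
      = (Real.sqrt (2 * Real.pi))⁻¹ * gTail z := by
  have hπ : (0:ℝ) < Real.sqrt (2 * Real.pi) := Real.sqrt_pos.mpr (by positivity)
  have h := intervalIntegral.integral_Iic_add_Ioi (b := z) (μ := volume)
    integrable_gauss.integrableOn integrable_gauss.integrableOn
  rw [integral_gauss_total] at h
  rw [integral_div]
  rw [show (∫ x in Set.Iic z, Real.exp (-x ^ 2 / 2)) = Real.sqrt (2 * Real.pi) - gTail z by
    rw [← h]; unfold gTail; ring]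
  field_simp
  ring

lemma deriv_aux {x : ℝ} (hx : x ≠ 0) :
    HasDerivAt (fun x : ℝ => -Real.exp (-x ^ 2 / 2) / x)
      ((1 + (x⁻¹) ^ 2) * Real.exp (-x ^ 2 / 2)) x := by
  have h1 : HasDerivAt (fun x : ℝ => -x ^ 2 / 2) (-x) x := by
    have := ((hasDerivAt_pow 2 x).neg).div_const 2
    simpa using this.congr_deriv (by ring)
  have h2 : HasDerivAt (fun x : ℝ => Real.exp (-x ^ 2 / 2))
      (Real.exp (-x ^ 2 / 2) * (-x)) x := h1.exp
  have h3 := (h2.neg).div (hasDerivAt_id x) hx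
  refine h3.congr_deriv ?_
  simp only [id, Pi.neg_apply]
  field_simp
  ring

lemma tail_aux_integrable {t : ℝ} (ht : 0 < t) :
    IntegrableOn (fun x : ℝ => (1 + (x⁻¹) ^ 2) * Real.exp (-x ^ 2 / 2)) (Set.Ioi t) := by
  refine Integrable.mono' (g := fun x : ℝ => (1 + (t⁻¹) ^ 2) * Real.exp (-x ^ 2 / 2))
    ((integrable_gauss.const_mul _).restrict) ?_ ?_
  · exact (((measurable_const.add ((measurable_inv).pow_const 2)).mul
      ((measurable_id.pow_const 2).neg.div_const 2).exp)).aestronglyMeasurable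
  · filter_upwards [ae_restrict_mem measurableSet_Ioi] with x hx
    have hx0 : 0 < x := ht.trans hx
    have h1 : x⁻¹ ≤ t⁻¹ := by
      exact one_div x ▸ one_div t ▸ (one_div_le_one_div_of_le ht (le_of_lt hx))
    have h2 : (x⁻¹) ^ 2 ≤ (t⁻¹) ^ 2 := by
      apply pow_le_pow_left₀ (by positivity) h1
    rw [Real.norm_eq_abs, abs_of_nonneg (by positivity)]
    have := Real.exp_pos (-x ^ 2 / 2)
    nlinarith

lemma tail_aux_eq {t : ℝ} (ht : 0 < t) :
    ∫ x in Set.Ioi t, (1 + (x⁻¹) ^ 2) * Real.exp (-x ^ 2 / 2)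
      = Real.exp (-t ^ 2 / 2) / t := by
  have hlim : Tendsto (fun x : ℝ => -Real.exp (-x ^ 2 / 2) / x) atTop (nhds 0) := by
    have h1 : Tendsto (fun x : ℝ => -Real.exp (-x ^ 2 / 2)) atTop (nhds (-0)) := by
      refine Tendsto.neg ?_
      refine Real.tendsto_exp_atBot.comp ?_
      apply Tendsto.atBot_div_const (by norm_num)
      exact tendsto_neg_atTop_atBot.comp (tendsto_pow_atTop two_ne_zero)
    have := h1.div_atTop (f := fun x : ℝ => -Real.exp (-x ^ 2 / 2)) tendsto_id
    simpa using this
  have := integral_Ioi_of_hasDerivAt_of_tendsto' (a := t)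
    (f := fun x : ℝ => -Real.exp (-x ^ 2 / 2) / x)
    (f' := fun x : ℝ => (1 + (x⁻¹) ^ 2) * Real.exp (-x ^ 2 / 2))
    (fun x hx => deriv_aux (ht.trans_le hx).ne')
    (tail_aux_integrable ht) hlim
  rw [this]; field_simp
  ring

lemma gTail_le {t : ℝ} (ht : 0 < t) : gTail t ≤ Real.exp (-t ^ 2 / 2) / t := by
  rw [← tail_aux_eq ht]
  refine setIntegral_mono_on integrable_gauss.integrableOn (tail_aux_integrable ht)
    measurableSet_Ioi (fun x hx => ?_)
  have := Real.exp_pos (-x ^ 2 / 2)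
  nlinarith [sq_nonneg x⁻¹]

lemma le_gTail {t : ℝ} (ht : 0 < t) :
    (1 + (t⁻¹) ^ 2)⁻¹ * (Real.exp (-t ^ 2 / 2) / t) ≤ gTail t := by
  have h1 : ∫ x in Set.Ioi t, (1 + (x⁻¹) ^ 2) * Real.exp (-x ^ 2 / 2)
      ≤ (1 + (t⁻¹) ^ 2) * gTail t := by
    unfold gTail
    rw [← integral_const_mul]
    refine setIntegral_mono_on (tail_aux_integrable ht)
      ((integrable_gauss.const_mul _).restrict) measurableSet_Ioi (fun x hx => ?_)
    have hx0 : 0 < x := ht.trans hx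
    have h1 : x⁻¹ ≤ t⁻¹ := by
      exact one_div x ▸ one_div t ▸ (one_div_le_one_div_of_le ht (le_of_lt hx))
    have h2 : (x⁻¹) ^ 2 ≤ (t⁻¹) ^ 2 := pow_le_pow_left₀ (by positivity) h1 2
    have := Real.exp_pos (-x ^ 2 / 2)
    nlinarith
  rw [tail_aux_eq ht] at h1
  have hpos : (0:ℝ) < 1 + (t⁻¹) ^ 2 := by positivity
  rw [inv_mul_le_iff₀ hpos]
  linarith

lemma mills : Tendsto (fun t : ℝ => gTail t * Real.exp (t ^ 2 / 2) * t) atTop (nhds 1) := by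
  have hlo : Tendsto (fun t : ℝ => (1 + (t⁻¹) ^ 2)⁻¹) atTop (nhds 1) := by
    have : Tendsto (fun t : ℝ => 1 + (t⁻¹) ^ 2) atTop (nhds (1 + 0 ^ 2)) :=
      tendsto_const_nhds.add (tendsto_inv_atTop_zero.pow 2)
    simpa using this.inv₀ (by norm_num)
  refine tendsto_of_tendsto_of_tendsto_of_le_of_le' hlo tendsto_const_nhds ?_ ?_
  · filter_upwards [eventually_gt_atTop (0:ℝ)] with t ht
    have h := le_gTail ht
    have he : Real.exp (-t ^ 2 / 2) * Real.exp (t ^ 2 / 2) = 1 := by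
      rw [← Real.exp_add]; norm_num [neg_div]
    have hepos := Real.exp_pos (t ^ 2 / 2)
    calc (1 + (t⁻¹) ^ 2)⁻¹ = (1 + (t⁻¹) ^ 2)⁻¹ * (Real.exp (-t ^ 2 / 2) / t)
          * Real.exp (t ^ 2 / 2) * t := by
          rw [show (1 + (t⁻¹) ^ 2)⁻¹ * (Real.exp (-t ^ 2 / 2) / t) * Real.exp (t ^ 2 / 2) * t
              = (1 + (t⁻¹) ^ 2)⁻¹ * ((Real.exp (-t ^ 2 / 2) * Real.exp (t ^ 2 / 2)) * (t⁻¹ * t))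
              from by ring, he, inv_mul_cancel₀ ht.ne']
          ring
      _ ≤ gTail t * Real.exp (t ^ 2 / 2) * t := by
          apply mul_le_mul_of_nonneg_right (mul_le_mul_of_nonneg_right h hepos.le) ht.le
  · filter_upwards [eventually_gt_atTop (0:ℝ)] with t ht
    have h := gTail_le ht
    have he : Real.exp (-t ^ 2 / 2) * Real.exp (t ^ 2 / 2) = 1 := by
      rw [← Real.exp_add]; norm_num [neg_div]
    have hepos := Real.exp_pos (t ^ 2 / 2)
    calc gTail t * Real.exp (t ^ 2 / 2) * t
        ≤ (Real.exp (-t ^ 2 / 2) / t) * Real.exp (t ^ 2 / 2) * t := by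
          apply mul_le_mul_of_nonneg_right (mul_le_mul_of_nonneg_right h hepos.le) ht.le
      _ = 1 := by rw [div_mul_eq_mul_div, div_mul_cancel₀ _ ht.ne', he]

lemma pdf_even (v : NNReal) (x : ℝ) :
    gaussianPDFReal 0 v (-x) = gaussianPDFReal 0 v x := by
  unfold gaussianPDFReal
  congr 2
  ring

lemma gauss_two_sided {s t : ℝ} (hs : 0 < s) (ht : 0 < t) :
    (gaussianReal 0 (s ^ 2).toNNReal {x : ℝ | s * t < |x|}).toReal
      = 2 * (Real.sqrt (2 * Real.pi))⁻¹ * gTail t := by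
  set v : NNReal := (s ^ 2).toNNReal with hv
  have hv0 : v ≠ 0 := by
    simp [hv, Real.toNNReal_eq_zero, not_le]
    positivity
  have hvc : (v : ℝ) = s ^ 2 := Real.coe_toNNReal _ (sq_nonneg s)
  set lam := s * t with hlam
  have hlam0 : 0 < lam := mul_pos hs ht
  have hSeq : {x : ℝ | lam < |x|} = Set.Iio (-lam) ∪ Set.Ioi lam := by
    ext x
    simp only [Set.mem_setOf_eq, Set.mem_union, Set.mem_Iio, Set.mem_Ioi, lt_abs]
    constructor
    · rintro (h | h)
      · exact Or.inr h
      · exact Or.inl (by linarith)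
    · rintro (h | h)
      · exact Or.inr (by linarith)
      · exact Or.inl h
  rw [gaussianReal_apply_eq_integral 0 hv0, ENNReal.toReal_ofReal
    (setIntegral_nonneg (by rw [hSeq]; measurability) (fun x _ => gaussianPDFReal_nonneg 0 v x))]
  rw [hSeq, setIntegral_union ?disj measurableSet_Ioi
    (integrable_gaussianPDFReal 0 v).integrableOn (integrable_gaussianPDFReal 0 v).integrableOn]
  case disj =>
    exact Disjoint.mono_left Set.Iio_subset_Iic_self (Set.Iic_disjoint_Ioi (by linarith))
  have hneg : ∫ x in Set.Iio (-lam), gaussianPDFReal 0 v x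
      = ∫ x in Set.Ioi lam, gaussianPDFReal 0 v x := by
    rw [← MeasureTheory.integral_Iic_eq_integral_Iio, ← integral_comp_neg_Ioi]
    exact setIntegral_congr_fun measurableSet_Ioi (fun x _ => pdf_even v x)
  rw [hneg, ← two_mul]
  have hpdf : ∀ x : ℝ, gaussianPDFReal 0 v x
      = (Real.sqrt (2 * Real.pi) * s)⁻¹ * Real.exp (-(x / s) ^ 2 / 2) := by
    intro x
    have h1 : Real.sqrt (2 * Real.pi * (s ^ 2)) = Real.sqrt (2 * Real.pi) * s := by
      rw [Real.sqrt_mul (by positivity), Real.sqrt_sq hs.le]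
    have h2 : -(x - 0) ^ 2 / (2 * s ^ 2) = -(x / s) ^ 2 / 2 := by
      field_simp
      ring
    unfold gaussianPDFReal
    rw [hvc, h1, h2]
  simp_rw [hpdf]
  rw [integral_const_mul]
  have hsub : ∫ x in Set.Ioi lam, Real.exp (-(x / s) ^ 2 / 2) = s * gTail t := by
    have key := integral_comp_mul_left_Ioi (fun x => Real.exp (-(x / s) ^ 2 / 2)) t hs
    simp only [smul_eq_mul] at key
    have h2 : ∫ x in Set.Ioi t, Real.exp (-(s * x / s) ^ 2 / 2) = gTail t := by
      unfold gTail
      apply setIntegral_congr_fun measurableSet_Ioi (fun x _ => ?_)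
      rw [mul_comm, mul_div_assoc, div_self hs.ne', mul_one]
    rw [h2] at key
    rw [show (Set.Ioi lam) = Set.Ioi (s * t) from rfl, key]
    field_simp
  rw [hsub]
  have hπ : Real.sqrt (2 * Real.pi) ≠ 0 := by positivity
  field_simp

/-- The two-sided moderate deviation probability for a Gaussian sample mean:
with `X̄_n ~ N(0, σ²/n)` and `λ_n = a√((log n)/n)`,
`P(|X̄_n| > λ_n) = 2(1 - Φ((a/σ)√(log n)))` and
`P(|X̄_n| > λ_n) · n^{a²/(2σ²)} · √(log n) → √2 σ/(a√π)`. -/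
theorem gaussian_md_boundary (a σ : ℝ) (ha : 0 < a) (hσ : 0 < σ)
    (P : ℕ → ℝ)
    (hP : ∀ n : ℕ, P n =
      (gaussianReal 0 ((σ ^ 2 / n).toNNReal)
        {x : ℝ | a * Real.sqrt (Real.log n / n) < |x|}).toReal) :
    (∀ n : ℕ, 2 ≤ n →
        P n = 2 * (1 - stdNormalCDF ((a / σ) * Real.sqrt (Real.log n)))) ∧
    Tendsto (fun n : ℕ =>
        P n * (n : ℝ) ^ (a ^ 2 / (2 * σ ^ 2)) * Real.sqrt (Real.log n))
      atTop (nhds (Real.sqrt 2 * σ / (a * Real.sqrt Real.pi))) := by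
  have key : ∀ n : ℕ, 2 ≤ n →
      P n = 2 * (Real.sqrt (2 * Real.pi))⁻¹ * gTail ((a / σ) * Real.sqrt (Real.log n)) := by
    intro n hn
    have hn0 : (0:ℝ) < n := by exact_mod_cast Nat.lt_of_lt_of_le (by norm_num) hn
    have hn1 : (1:ℝ) < n := by exact_mod_cast Nat.lt_of_lt_of_le (by norm_num) hn
    have hlog : 0 < Real.log n := Real.log_pos hn1
    have hsqn : 0 < Real.sqrt n := Real.sqrt_pos.mpr hn0
    set s : ℝ := σ / Real.sqrt n with hsdef
    set t : ℝ := (a / σ) * Real.sqrt (Real.log n) with htdef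
    have hs : 0 < s := by positivity
    have ht : 0 < t := by positivity
    have hst : s * t = a * Real.sqrt (Real.log n / n) := by
      rw [Real.sqrt_div hlog.le, hsdef, htdef]
      field_simp
    have hv : (σ ^ 2 / n : ℝ).toNNReal = ((s : ℝ) ^ 2).toNNReal := by
      congr 1
      rw [hsdef, div_pow, Real.sq_sqrt hn0.le]
    rw [hP n, hv, ← hst]
    exact gauss_two_sided hs ht
  refine ⟨fun n hn => ?_, ?_⟩
  · rw [key n hn]
    unfold stdNormalCDF
    rw [one_sub_cdf]
    ring
  · have hC : Tendsto (fun n : ℕ =>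
        (2 * (Real.sqrt (2 * Real.pi))⁻¹ * (σ / a)) *
          (gTail ((a / σ) * Real.sqrt (Real.log n))
            * Real.exp (((a / σ) * Real.sqrt (Real.log n)) ^ 2 / 2)
            * ((a / σ) * Real.sqrt (Real.log n)))) atTop
        (nhds ((2 * (Real.sqrt (2 * Real.pi))⁻¹ * (σ / a)) * 1)) := by
      refine Tendsto.const_mul _ (mills.comp ?_)
      refine Tendsto.const_mul_atTop (by positivity) ?_
      have hs : Tendsto Real.sqrt atTop atTop := by
        refine (tendsto_rpow_atTop (y := (1:ℝ)/2) (by norm_num)).congr' ?_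
        filter_upwards [eventually_ge_atTop (0:ℝ)] with x hx
        exact (Real.sqrt_eq_rpow x).symm
      exact hs.comp ((Real.tendsto_log_atTop).comp tendsto_natCast_atTop_atTop)
    have hfinal : (2 * (Real.sqrt (2 * Real.pi))⁻¹ * (σ / a)) * 1
        = Real.sqrt 2 * σ / (a * Real.sqrt Real.pi) := by
      rw [Real.sqrt_mul (by norm_num : (0:ℝ) ≤ 2)]
      have h2 : Real.sqrt 2 * Real.sqrt 2 = 2 := Real.mul_self_sqrt (by norm_num)
      have hπ : (0:ℝ) < Real.sqrt Real.pi := Real.sqrt_pos.mpr Real.pi_pos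
      have h2' : (0:ℝ) < Real.sqrt 2 := by norm_num [Real.sqrt_pos]
      field_simp
      linear_combination (-1 : ℝ) * h2
    rw [← hfinal]
    refine Tendsto.congr' ?_ hC
    filter_upwards [eventually_ge_atTop 2] with n hn
    have hn0 : (0:ℝ) < n := by exact_mod_cast Nat.lt_of_lt_of_le (by norm_num) hn
    have hn1 : (1:ℝ) < n := by exact_mod_cast Nat.lt_of_lt_of_le (by norm_num) hn
    have hlog : 0 < Real.log n := Real.log_pos hn1
    set t : ℝ := (a / σ) * Real.sqrt (Real.log n) with htdef
    have hrpow : (n : ℝ) ^ (a ^ 2 / (2 * σ ^ 2)) = Real.exp (t ^ 2 / 2) := by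
      rw [Real.rpow_def_of_pos hn0]
      congr 1
      rw [htdef, mul_pow, div_pow, Real.sq_sqrt hlog.le]
      field_simp
    rw [key n hn, hrpow]
    rw [htdef]
    field_simp
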